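/- Let N ≥ 1, let X be an N×N complex matrix, and let A be the (2N+1)×(2N+1) matrix on the index set {v} ⊔ {s_1,…,s_N} ⊔ {t_1,…,t_N} defined by A(v, s_i) = 1, A(s_i, t_j) = X_{ij}, A(t_j, v) = 1, and 0 elsewhere. Set σ = Σ_{i,j} X_{ij}. Then the characteristic polynomial of A³ equals x^{2N−2}·(x − σ)³; in particular, the eigenvalues of A³ with multiplicity are σ (three times) and 0 (2N−2 times). -/

import Mathlib

set_option autoImplicit false
set_option maxHeartbeats 1000000
set_option synthInstance.maxHeartbeats 400000

open Polynomial

/-- The adjacency matrix of the directed tripartite gadget: a utility node `v`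
(the `Sum.inl` index), `N` sources and `N` targets, with edges `v → s_i` of weight `1`,
`s_i → t_j` of weight `M i j`, and `t_j → v` of weight `1`. -/
def gadgetMatrix (N : ℕ) (M : Matrix (Fin N) (Fin N) ℂ) :
    Matrix (Unit ⊕ Fin N ⊕ Fin N) (Unit ⊕ Fin N ⊕ Fin N) ℂ :=
  Matrix.of fun p q =>
    match p, q with
    | Sum.inl _, Sum.inr (Sum.inl _) => 1
    | Sum.inr (Sum.inl i), Sum.inr (Sum.inr j) => M i j
    | Sum.inr (Sum.inr _), Sum.inl _ => 1
    | _, _ => 0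

section entries
variable {N : ℕ} {M : Matrix (Fin N) (Fin N) ℂ} (a b : Unit) (i j : Fin N)
@[simp] lemma g_ll : gadgetMatrix N M (Sum.inl a) (Sum.inl b) = 0 := rfl
@[simp] lemma g_ls : gadgetMatrix N M (Sum.inl a) (Sum.inr (Sum.inl i)) = 1 := rfl
@[simp] lemma g_lt : gadgetMatrix N M (Sum.inl a) (Sum.inr (Sum.inr j)) = 0 := rfl
@[simp] lemma g_sl : gadgetMatrix N M (Sum.inr (Sum.inl i)) (Sum.inl a) = 0 := rfl
@[simp] lemma g_ss : gadgetMatrix N M (Sum.inr (Sum.inl i)) (Sum.inr (Sum.inl j)) = 0 := rfl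
@[simp] lemma g_st : gadgetMatrix N M (Sum.inr (Sum.inl i)) (Sum.inr (Sum.inr j)) = M i j := rfl
@[simp] lemma g_tl : gadgetMatrix N M (Sum.inr (Sum.inr j)) (Sum.inl a) = 1 := rfl
@[simp] lemma g_ts : gadgetMatrix N M (Sum.inr (Sum.inr j)) (Sum.inr (Sum.inl i)) = 0 := rfl
@[simp] lemma g_tt : gadgetMatrix N M (Sum.inr (Sum.inr i)) (Sum.inr (Sum.inr j)) = 0 := rfl
end entries

open Matrix in
/-- Characteristic polynomial of a rank-one matrix `u wᵀ`. -/
lemma charpoly_col_mul_row_aux {n : ℕ} (hn : 1 ≤ n) (u w : Fin n → ℂ) :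
    (Matrix.replicateCol Unit u * Matrix.replicateRow Unit w).charpoly
      = X ^ (n - 1) * (X - C (w ⬝ᵥ u)) := by
  classical
  set K := FractionRing ℂ[X]
  set φ : ℂ[X] →+* K := algebraMap ℂ[X] K with hφ
  have hinj : Function.Injective φ := IsFractionRing.injective ℂ[X] K
  apply hinj
  set x : K := φ X with hx
  have hx0 : x ≠ 0 := by
    simp only [hx, hφ, Ne, map_eq_zero_iff _ hinj]
    exact (map_ne_zero_iff φ hinj).mpr (Polynomial.X_ne_zero (R := ℂ))
  have hxx : x * x⁻¹ = 1 := mul_inv_cancel₀ hx0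
  set U : Fin n → K := fun i => φ (C (u i)) with hU
  set W : Fin n → K := fun i => φ (C (w i)) with hW
  have hmap : ((Matrix.replicateCol Unit u * Matrix.replicateRow Unit w).charmatrix).map φ
      = x • (1 + Matrix.replicateCol Unit (fun i => -(x⁻¹ * U i)) * Matrix.replicateRow Unit W) := by
    ext i j
    by_cases h : i = j
    · subst h
      simp only [Matrix.map_apply, charmatrix_apply_eq, Matrix.mul_apply, map_sub,
        _root_.map_mul, Matrix.smul_apply, Matrix.add_apply, Matrix.one_apply_eq,
        Matrix.replicateCol_apply, Matrix.replicateRow_apply, Finset.univ_unique, Finset.sum_singleton,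
        smul_eq_mul]
      rw [mul_add, mul_one, neg_mul, mul_neg, ← mul_assoc, ← mul_assoc, hxx, one_mul,
        ← sub_eq_add_neg]
    · simp only [Matrix.map_apply, charmatrix_apply_ne _ _ _ h, Matrix.mul_apply,
        _root_.map_mul, map_neg, Matrix.smul_apply, Matrix.add_apply,
        Matrix.one_apply_ne h, Matrix.replicateCol_apply, Matrix.replicateRow_apply, Finset.univ_unique,
        Finset.sum_singleton, smul_eq_mul, zero_add]
      rw [show x * (-(x⁻¹ * U i) * W j) = -(x * x⁻¹ * (U i * W j)) by ring, hxx, one_mul]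
  rw [Matrix.charpoly, RingHom.map_det, RingHom.mapMatrix_apply, hmap,
    Matrix.det_smul, Matrix.det_one_add_replicateCol_mul_replicateRow]
  have hdot : (W ⬝ᵥ fun i => -(x⁻¹ * U i)) = -(x⁻¹ * φ (C (w ⬝ᵥ u))) := by
    have hs : φ (C (w ⬝ᵥ u)) = ∑ i, W i * U i := by
      simp [dotProduct, map_sum, _root_.map_mul, hU, hW]
    rw [hs, dotProduct, Finset.mul_sum, ← Finset.sum_neg_distrib]
    exact Finset.sum_congr rfl fun i _ => by ring
  rw [hdot, Fintype.card_fin]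
  rw [_root_.map_mul, map_pow, map_sub, ← hx]
  have hxn : x ^ n = x ^ (n - 1) * x := by
    rw [← pow_succ, Nat.sub_add_cancel hn]
  rw [hxn, mul_assoc]
  congr 1
  rw [mul_add, mul_one, mul_neg, ← mul_assoc, hxx, one_mul, ← sub_eq_add_neg]

open Matrix in
lemma gadget_cube (N : ℕ) (M : Matrix (Fin N) (Fin N) ℂ) :
    gadgetMatrix N M ^ 3
      = Matrix.fromBlocks (Matrix.of fun _ _ : Unit => ∑ i, ∑ j, M i j) 0 0
          (Matrix.fromBlocks
            (Matrix.replicateCol Unit (fun i => ∑ j, M i j) * Matrix.replicateRow Unit (fun _ => (1 : ℂ))) 0 0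
            (Matrix.replicateCol Unit (fun _ => (1 : ℂ)) * Matrix.replicateRow Unit (fun m => ∑ i, M i m))) := by
  rw [pow_succ, pow_succ, pow_one]
  ext p q
  rcases p with p | p | p <;> rcases q with q | q | q <;>
    simp [Matrix.mul_apply, Fintype.sum_sum_type, Finset.mul_sum, Finset.sum_mul] <;>
    try rw [Finset.sum_comm]

/-- With `σ = Σ_{i,j} M_{ij}`, the characteristic polynomial of the
cube of the gadget matrix is `x^{2N-2}·(x - σ)³`; in particular its eigenvalues with
multiplicity are `σ` (three times) and `0` (`2N-2` times). -/
theorem gadgetMatrix_cube_charpoly (N : ℕ) (hN : 1 ≤ N) (M : Matrix (Fin N) (Fin N) ℂ) :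
    (gadgetMatrix N M ^ 3).charpoly
      = X ^ (2 * N - 2) * (X - C (∑ i, ∑ j, M i j)) ^ 3 := by
  classical
  rw [gadget_cube N M, Matrix.charpoly_fromBlocks_zero₁₂, Matrix.charpoly_fromBlocks_zero₁₂]
  have h1 : (Matrix.of fun _ _ : Unit => ∑ i, ∑ j, M i j).charpoly
      = X - C (∑ i, ∑ j, M i j) := by
    rw [Matrix.charpoly, Matrix.det_unique, Matrix.charmatrix_apply_eq]
    rfl
  have h2 := charpoly_col_mul_row_aux hN (fun i => ∑ j, M i j) (fun _ => (1 : ℂ))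
  have h3 := charpoly_col_mul_row_aux hN (fun _ => (1 : ℂ)) (fun m => ∑ i, M i m)
  have hd2 : dotProduct (fun _ => (1 : ℂ)) (fun i => ∑ j, M i j)
      = ∑ i, ∑ j, M i j := by
    simp [dotProduct]
  have hd3 : dotProduct (fun m => ∑ i, M i m) (fun _ => (1 : ℂ))
      = ∑ i, ∑ j, M i j := by
    simp only [dotProduct, mul_one]
    exact Finset.sum_comm
  rw [hd2] at h2
  rw [hd3] at h3
  rw [h1, h2, h3]
  have hexp : 2 * N - 2 = (N - 1) + (N - 1) := by omega
  rw [hexp, pow_add]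
  ring
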